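/- Let V be a 3-dimensional vector space over a field k, Λ a nonzero alternating trilinear form on V, and a, b, c, b', c' ∈ V. Then Λ(b,c,c')Λ(a,c,b')Λ(b,b',c') + Λ(b,c,b')Λ(c,b',c')Λ(a,b,c') − Λ(b,c,b')Λ(a,c,c')Λ(b,b',c') − Λ(b,c,c')Λ(c,b',c')Λ(a,b,b') = 0. -/

import Mathlib

/-- For a nonzero alternating trilinear form `Λ` on a 3-dimensional vector
space `V` over a field `k` and vectors `a, b, c, b', c' ∈ V`:
`Λ(b,c,c')Λ(a,c,b')Λ(b,b',c') + Λ(b,c,b')Λ(c,b',c')Λ(a,b,c')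
 - Λ(b,c,b')Λ(a,c,c')Λ(b,b',c') - Λ(b,c,c')Λ(c,b',c')Λ(a,b,b') = 0`. -/
theorem stmt5 {k V : Type*} [Field k] [AddCommGroup V] [Module k V]
    [FiniteDimensional k V] (hdim : Module.finrank k V = 3)
    (Λ : V [⋀^Fin 3]→ₗ[k] k) (hΛ : Λ ≠ 0)
    (a b c b' c' : V) :
    Λ ![b, c, c'] * Λ ![a, c, b'] * Λ ![b, b', c']
      + Λ ![b, c, b'] * Λ ![c, b', c'] * Λ ![a, b, c']
      - Λ ![b, c, b'] * Λ ![a, c, c'] * Λ ![b, b', c']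
      - Λ ![b, c, c'] * Λ ![c, b', c'] * Λ ![a, b, b'] = 0 := by
  let e : Module.Basis (Fin 3) k V := Module.finBasisOfFinrankEq k V hdim
  set d := Λ ⇑e with hd
  have key : ∀ v : Fin 3 → V, Λ v = d * (e.toMatrix v).det := by
    intro v
    conv_lhs => rw [Λ.eq_smul_basis_det e]
    rw [AlternatingMap.smul_apply, Module.Basis.det_apply, smul_eq_mul]
  simp only [key, Matrix.det_fin_three, Module.Basis.toMatrix_apply, Matrix.cons_val_zero,
    Matrix.cons_val_one, Matrix.head_cons, Matrix.cons_val_two, Matrix.tail_cons]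
  ring
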